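/- Let P, A, G, Q : ℝ → Matrix n n ℝ be differentiable with P(t) and G(t) symmetric for all t, and suppose the point-wise Riccati identity P(t)A(t) + A(t)ᵀP(t) − P(t)G(t)P(t) + Q(t) = 0 holds for all t. Then, with A_c := A − G P, the derivative P′ satisfies the Lyapunov equation P′(t) A_c(t) + A_c(t)ᵀ P′(t) + Q̃(t) = 0 for all t, where Q̃ := P A′ + (A′)ᵀ P − P G′ P + Q′. -/

import Mathlib

open Matrix

private lemma hd_mul {n : ℕ} {M M' N N' : ℝ → Matrix (Fin n) (Fin n) ℝ}
    (hM : ∀ (t : ℝ) (i j : Fin n), HasDerivAt (fun s => M s i j) (M' t i j) t)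
    (hN : ∀ (t : ℝ) (i j : Fin n), HasDerivAt (fun s => N s i j) (N' t i j) t)
    (t : ℝ) (i j : Fin n) :
    HasDerivAt (fun s => (M s * N s) i j) ((M' t * N t + M t * N' t) i j) t := by
  simp only [Matrix.mul_apply, Matrix.add_apply]
  rw [← Finset.sum_add_distrib]
  exact HasDerivAt.fun_sum fun k _ => ((hM t i k).mul (hN t k j))

/-- Differentiating the state-dependent Riccati equation along closed-loop
trajectories (equation (18)): the derivative `Ṗ` satisfies the Lyapunov
equation `Ṗ A_c + A_cᵀ Ṗ + Q̃ = 0` with `A_c = A − G P` and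
`Q̃ = P Ȧ + Ȧᵀ P − P Ġ P + Q̇`. -/
theorem riccati_derivative_lyapunov_equation {n : ℕ}
    (P P' A A' G G' Q Q' : ℝ → Matrix (Fin n) (Fin n) ℝ)
    (hP : ∀ (t : ℝ) (i j : Fin n), HasDerivAt (fun s => P s i j) (P' t i j) t)
    (hA : ∀ (t : ℝ) (i j : Fin n), HasDerivAt (fun s => A s i j) (A' t i j) t)
    (hG : ∀ (t : ℝ) (i j : Fin n), HasDerivAt (fun s => G s i j) (G' t i j) t)
    (hQ : ∀ (t : ℝ) (i j : Fin n), HasDerivAt (fun s => Q s i j) (Q' t i j) t)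
    (hPsymm : ∀ t : ℝ, (P t).IsSymm)
    (hGsymm : ∀ t : ℝ, (G t).IsSymm)
    (hRic : ∀ t : ℝ, P t * A t + (A t)ᵀ * P t - P t * G t * P t + Q t = 0) :
    ∀ t : ℝ,
      P' t * (A t - G t * P t) + (A t - G t * P t)ᵀ * P' t
        + (P t * A' t + (A' t)ᵀ * P t - P t * G' t * P t + Q' t) = 0 := by
  intro t
  have hAT : ∀ (t : ℝ) (i j : Fin n),
      HasDerivAt (fun s => (A s)ᵀ i j) ((A' t)ᵀ i j) t := by
    intro t i j
    simpa [Matrix.transpose_apply] using hA t j i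
  -- derivative of the Riccati expression
  have hD : ∀ i j : Fin n,
      HasDerivAt (fun s => (P s * A s + (A s)ᵀ * P s - P s * G s * P s + Q s) i j)
        (((P' t * A t + P t * A' t) + ((A' t)ᵀ * P t + (A t)ᵀ * P' t)
          - ((P' t * G t + P t * G' t) * P t + P t * G t * P' t) + Q' t) i j) t := by
    intro i j
    have h1 := hd_mul hP hA t i j
    have h2 := hd_mul hAT hP t i j
    have h3 := hd_mul (hd_mul hP hG) hP t i j
    have h4 := hQ t i j
    simpa [Matrix.add_apply, Matrix.sub_apply] using ((h1.fun_add h2).fun_sub h3).fun_add h4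
  have hzero : ∀ i j : Fin n,
      HasDerivAt (fun s => (P s * A s + (A s)ᵀ * P s - P s * G s * P s + Q s) i j)
        (0 : ℝ) t := by
    intro i j
    have : (fun s => (P s * A s + (A s)ᵀ * P s - P s * G s * P s + Q s) i j)
        = fun _ => (0 : ℝ) := by
      funext s; rw [hRic s]; simp
    rw [this]; exact hasDerivAt_const t 0
  have hDzero :
      (P' t * A t + P t * A' t) + ((A' t)ᵀ * P t + (A t)ᵀ * P' t)
        - ((P' t * G t + P t * G' t) * P t + P t * G t * P' t) + Q' t = 0 := by
    ext i j
    have := (hD i j).unique (hzero i j)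
    simpa using this
  rw [Matrix.transpose_sub, Matrix.transpose_mul, (hPsymm t).eq, (hGsymm t).eq]
  calc P' t * (A t - G t * P t) + ((A t)ᵀ - P t * G t) * P' t
        + (P t * A' t + (A' t)ᵀ * P t - P t * G' t * P t + Q' t)
      = (P' t * A t + P t * A' t) + ((A' t)ᵀ * P t + (A t)ᵀ * P' t)
        - ((P' t * G t + P t * G' t) * P t + P t * G t * P' t) + Q' t := by
        noncomm_ring
    _ = 0 := hDzero
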